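/- arXiv:1003.6042 — 2 statements merged into one kernel-verified Lean document; each statement's English description precedes it below -/
import Mathlib

section
/- Moment generating function identity for the Ehrenfest transition probabilities (proof of Theorem 3.3(a)): for every i ∈ {0,1,…,N}, every t ≥ 0 and every real z, Σ_{j=0}^{N} p_{ij}(t) · z^j = [q + p·z − q·(1−z)·e^{−λ(α+β)t}]^i · [q + p·z + p·(1−z)·e^{−λ(α+β)t}]^{N−i}. -/
open Finset

/-- The Krawtchouk polynomial `K_l(x; N; p)`, defined via the hypergeometric sum. -/
noncomputable def krawtchouk (N : ℕ) (p : ℝ) (l x : ℕ) : ℝ :=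
  ∑ k ∈ Finset.range (N + 1),
    ((ascPochhammer ℝ k).eval (-(l : ℝ)) * (ascPochhammer ℝ k).eval (-(x : ℝ))) /
      ((ascPochhammer ℝ k).eval (-(N : ℝ)) * (Nat.factorial k : ℝ)) * (1 / p) ^ k

/-- Transition probabilities `p_{ij}(t)` of the continuous-time Ehrenfest process,
where `p = α/(α+β)` and `q = 1 - p`. -/
noncomputable def ehrenfestP (N : ℕ) (p q lam α β : ℝ) (i j : ℕ) (t : ℝ) : ℝ :=
  (N.choose j : ℝ) * (p / q) ^ j *
    ∑ x ∈ Finset.range (N + 1),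
      (N.choose x : ℝ) * p ^ x * q ^ (N - x) * krawtchouk N p i x * krawtchouk N p j x *
        Real.exp (-(lam * (α + β) * (x : ℝ) * t))

lemma krawtchouk_eq (N : ℕ) (p : ℝ) (l x : ℕ) :
    krawtchouk N p l x = ∑ k ∈ Finset.range (N + 1),
      (-1 : ℝ) ^ k * (l.descFactorial k : ℝ) * (x.descFactorial k : ℝ) /
        ((N.descFactorial k : ℝ) * (Nat.factorial k : ℝ)) * (1 / p) ^ k := by
  unfold krawtchouk
  refine Finset.sum_congr rfl fun k hk => ?_
  rw [ascPochhammer_eval_neg_eq_descPochhammer, ascPochhammer_eval_neg_eq_descPochhammer,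
    ascPochhammer_eval_neg_eq_descPochhammer, descPochhammer_eval_eq_descFactorial,
    descPochhammer_eval_eq_descFactorial, descPochhammer_eval_eq_descFactorial]
  rcases Nat.even_or_odd k with h | h
  · rw [h.neg_one_pow]; ring
  · rw [h.neg_one_pow, neg_one_mul, neg_one_mul, neg_one_mul,
      show (-(N.descFactorial k : ℝ)) * (Nat.factorial k : ℝ)
        = -((N.descFactorial k : ℝ) * (Nat.factorial k : ℝ)) from by ring,
      div_neg]
    ring

lemma krawtchouk_symm (N : ℕ) (p : ℝ) (l x : ℕ) :
    krawtchouk N p l x = krawtchouk N p x l := by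
  unfold krawtchouk
  exact Finset.sum_congr rfl fun k hk => by ring

lemma choose_descFactorial (N k i : ℕ) (h : k + i ≤ N) :
    N.choose (k + i) * (k + i).descFactorial k = N.descFactorial k * (N - k).choose i := by
  rw [Nat.descFactorial_eq_factorial_mul_choose (k+i) k,
    Nat.descFactorial_eq_factorial_mul_choose N k, ← Nat.mul_assoc,
    Nat.mul_comm (N.choose (k+i)), Nat.mul_assoc, Nat.mul_assoc,
    Nat.choose_mul (Nat.le_add_right k i), Nat.add_sub_cancel_left]

lemma sum_choose_desc (N k : ℕ) (hk : k ≤ N) (a b : ℝ) :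
    ∑ x ∈ range (N + 1), (N.choose x : ℝ) * (x.descFactorial k : ℝ) * a ^ x * b ^ (N - x)
      = (N.descFactorial k : ℝ) * a ^ k * (a + b) ^ (N - k) := by
  have h1 : ∑ x ∈ range (N + 1), (N.choose x : ℝ) * (x.descFactorial k : ℝ) * a ^ x * b ^ (N - x)
      = ∑ x ∈ Finset.Ico k (N + 1),
        (N.choose x : ℝ) * (x.descFactorial k : ℝ) * a ^ x * b ^ (N - x) := by
    refine (Finset.sum_subset ?_ ?_).symm
    · intro x hx; simp only [Finset.mem_Ico, Finset.mem_range] at *; omega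
    · intro x hx hx'
      simp only [Finset.mem_Ico, Finset.mem_range] at *
      have : x < k := by omega
      rw [Nat.descFactorial_eq_zero_iff_lt.mpr this]
      simp
  rw [h1, Finset.sum_Ico_eq_sum_range]
  have h2 : N + 1 - k = N - k + 1 := by omega
  rw [h2]
  have h3 : ∀ i ∈ range (N - k + 1),
      (N.choose (k + i) : ℝ) * ((k + i).descFactorial k : ℝ) * a ^ (k + i) * b ^ (N - (k + i))
        = (N.descFactorial k : ℝ) * a ^ k * (((N - k).choose i : ℝ) * a ^ i * b ^ (N - k - i)) := by
    intro i hi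
    simp only [Finset.mem_range] at hi
    have hik : k + i ≤ N := by omega
    have := choose_descFactorial N k i hik
    have hcast : (N.choose (k + i) : ℝ) * ((k + i).descFactorial k : ℝ)
        = (N.descFactorial k : ℝ) * ((N - k).choose i : ℝ) := by
      exact_mod_cast congrArg (Nat.cast : ℕ → ℝ) this
    have hsub : N - (k + i) = N - k - i := by omega
    rw [pow_add, hsub]
    calc (N.choose (k + i) : ℝ) * ((k + i).descFactorial k : ℝ) * (a ^ k * a ^ i) * b ^ (N - k - i)
        = ((N.choose (k + i) : ℝ) * ((k + i).descFactorial k : ℝ)) * (a ^ k * a ^ i) * b ^ (N-k-i) := by ring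
      _ = ((N.descFactorial k : ℝ) * ((N - k).choose i : ℝ)) * (a ^ k * a ^ i) * b ^ (N-k-i) := by rw [hcast]
      _ = (N.descFactorial k : ℝ) * a ^ k * (((N - k).choose i : ℝ) * a ^ i * b ^ (N - k - i)) := by ring
  rw [Finset.sum_congr rfl h3, ← Finset.mul_sum]
  congr 1
  rw [add_pow]
  exact Finset.sum_congr rfl fun i hi => by ring

lemma kraw_genfun (N m : ℕ) (hm : m ≤ N) (p : ℝ) (hp : p ≠ 0) (a b : ℝ) :
    ∑ x ∈ range (N + 1), (N.choose x : ℝ) * krawtchouk N p m x * a ^ x * b ^ (N - x)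
      = (a + b) ^ (N - m) * (a + b - a / p) ^ m := by
  have h1 : ∑ x ∈ range (N + 1), (N.choose x : ℝ) * krawtchouk N p m x * a ^ x * b ^ (N - x)
      = ∑ x ∈ range (N + 1), ∑ k ∈ range (N + 1),
          ((-1 : ℝ) ^ k * (m.descFactorial k : ℝ) / ((N.descFactorial k : ℝ) * (Nat.factorial k : ℝ))
            * (1 / p) ^ k)
          * ((N.choose x : ℝ) * (x.descFactorial k : ℝ) * a ^ x * b ^ (N - x)) := by
    refine Finset.sum_congr rfl fun x hx => ?_
    rw [krawtchouk_eq N p m x, Finset.mul_sum, Finset.sum_mul, Finset.sum_mul]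
    exact Finset.sum_congr rfl fun k hk => by ring
  rw [h1, Finset.sum_comm]
  have h2 : ∀ k ∈ range (N + 1),
      (∑ x ∈ range (N + 1),
        ((-1 : ℝ) ^ k * (m.descFactorial k : ℝ) / ((N.descFactorial k : ℝ) * (Nat.factorial k : ℝ))
          * (1 / p) ^ k)
        * ((N.choose x : ℝ) * (x.descFactorial k : ℝ) * a ^ x * b ^ (N - x)))
      = ((-1 : ℝ) ^ k * (m.descFactorial k : ℝ) / ((N.descFactorial k : ℝ) * (Nat.factorial k : ℝ))
          * (1 / p) ^ k) * ((N.descFactorial k : ℝ) * a ^ k * (a + b) ^ (N - k)) := by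
    intro k hk
    simp only [Finset.mem_range] at hk
    rw [← Finset.mul_sum, sum_choose_desc N k (by omega) a b]
  rw [Finset.sum_congr rfl h2]
  have h4 : ∑ k ∈ range (N + 1),
      ((-1 : ℝ) ^ k * (m.descFactorial k : ℝ) / ((N.descFactorial k : ℝ) * (Nat.factorial k : ℝ))
        * (1 / p) ^ k) * ((N.descFactorial k : ℝ) * a ^ k * (a + b) ^ (N - k))
      = ∑ k ∈ range (m + 1),
      ((-1 : ℝ) ^ k * (m.descFactorial k : ℝ) / ((N.descFactorial k : ℝ) * (Nat.factorial k : ℝ))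
        * (1 / p) ^ k) * ((N.descFactorial k : ℝ) * a ^ k * (a + b) ^ (N - k)) := by
    refine (Finset.sum_subset (Finset.range_subset_range.mpr (by omega)) ?_).symm
    intro k hk hk'
    simp only [Finset.mem_range] at hk hk'
    rw [Nat.descFactorial_eq_zero_iff_lt.mpr (by omega)]
    simp
  rw [h4]
  have h5 : ∀ k ∈ range (m + 1),
      ((-1 : ℝ) ^ k * (m.descFactorial k : ℝ) / ((N.descFactorial k : ℝ) * (Nat.factorial k : ℝ))
        * (1 / p) ^ k) * ((N.descFactorial k : ℝ) * a ^ k * (a + b) ^ (N - k))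
      = (a + b) ^ (N - m) * ((-(a / p)) ^ k * (a + b) ^ (m - k) * (m.choose k : ℝ)) := by
    intro k hk
    simp only [Finset.mem_range] at hk
    have hkm : k ≤ m := by omega
    have hNd : (N.descFactorial k : ℝ) ≠ 0 := by
      rw [Nat.cast_ne_zero]
      intro h0
      have := Nat.descFactorial_eq_zero_iff_lt.mp h0
      omega
    have hf : ((Nat.factorial k : ℝ)) ≠ 0 := by positivity
    have hNk : N - k = N - m + (m - k) := by omega
    have hmd : (m.descFactorial k : ℝ) = (Nat.factorial k : ℝ) * (m.choose k : ℝ) := by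
      exact_mod_cast congrArg (Nat.cast : ℕ → ℝ) (Nat.descFactorial_eq_factorial_mul_choose m k)
    rw [hNk, pow_add, hmd, neg_pow]
    field_simp
    ring
  rw [Finset.sum_congr rfl h5, ← Finset.mul_sum, ← add_pow (-(a/p)) (a+b) m]
  congr 1
  ring

/-- Moment generating function identity for the Ehrenfest transition probabilities. -/
theorem ehrenfest_mgf (N : ℕ) (lam α β : ℝ) (hlam : 0 < lam)
    (hα : α ∈ Set.Ioc (0 : ℝ) 1) (hβ : β ∈ Set.Ioc (0 : ℝ) 1)
    (p q : ℝ) (hp : p = α / (α + β)) (hq : q = 1 - p)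
    (i : ℕ) (hi : i ≤ N) (t : ℝ) (ht : 0 ≤ t) (z : ℝ) :
    ∑ j ∈ Finset.range (N + 1), ehrenfestP N p q lam α β i j t * z ^ j =
      (q + p * z - q * (1 - z) * Real.exp (-(lam * (α + β) * t))) ^ i *
        (q + p * z + p * (1 - z) * Real.exp (-(lam * (α + β) * t))) ^ (N - i) := by
  obtain ⟨hα0, hα1⟩ := hα
  obtain ⟨hβ0, hβ1⟩ := hβ
  have hab : (0:ℝ) < α + β := by linarith
  have hp0 : p ≠ 0 := by rw [hp]; positivity
  have hq0 : q ≠ 0 := by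
    rw [hq, hp]
    have : 1 - α / (α + β) = β / (α + β) := by field_simp; ring
    rw [this]; positivity
  set s : ℝ := Real.exp (-(lam * (α + β) * t)) with hsdef
  have hE : ∀ x : ℕ, Real.exp (-(lam * (α + β) * (x : ℝ) * t)) = s ^ x := by
    intro x
    rw [hsdef, ← Real.exp_nat_mul]
    congr 1
    ring
  have key : ∀ x ∈ range (N + 1),
      ∑ j ∈ range (N + 1),
        (N.choose j : ℝ) * krawtchouk N p j x * (p / q * z) ^ j * (1 : ℝ) ^ (N - j)
      = (p / q * z + 1) ^ (N - x) * (1 - z) ^ x := by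
    intro x hx
    simp only [Finset.mem_range] at hx
    have h := kraw_genfun N x (by omega) p hp0 (p / q * z) 1
    rw [Finset.sum_congr rfl (fun j _ => by rw [krawtchouk_symm N p j x]), h]
    congr 1
    have hq0' : (1 : ℝ) - p ≠ 0 := by rw [← hq]; exact hq0
    have : p / q * z + 1 - p / q * z / p = 1 - z := by
      rw [hq]; field_simp; ring
    rw [this]
  calc ∑ j ∈ Finset.range (N + 1), ehrenfestP N p q lam α β i j t * z ^ j
      = ∑ j ∈ range (N + 1), ∑ x ∈ range (N + 1),
          ((N.choose x : ℝ) * p ^ x * q ^ (N - x) * krawtchouk N p i x * s ^ x) *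
            ((N.choose j : ℝ) * krawtchouk N p j x * (p / q * z) ^ j * (1 : ℝ) ^ (N - j)) := by
        refine Finset.sum_congr rfl fun j hj => ?_
        rw [ehrenfestP, Finset.mul_sum, Finset.sum_mul]
        refine Finset.sum_congr rfl fun x hx => ?_
        rw [hE x]
        ring
    _ = ∑ x ∈ range (N + 1),
          ((N.choose x : ℝ) * p ^ x * q ^ (N - x) * krawtchouk N p i x * s ^ x) *
            ((p / q * z + 1) ^ (N - x) * (1 - z) ^ x) := by
        rw [Finset.sum_comm]
        refine Finset.sum_congr rfl fun x hx => ?_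
        rw [← Finset.mul_sum, key x hx]
    _ = ∑ x ∈ range (N + 1),
          (N.choose x : ℝ) * krawtchouk N p i x * (p * s * (1 - z)) ^ x * (p * z + q) ^ (N - x) := by
        refine Finset.sum_congr rfl fun x hx => ?_
        have h1 : (p * z + q) ^ (N - x) = q ^ (N - x) * (p / q * z + 1) ^ (N - x) := by
          rw [← mul_pow]
          congr 1
          field_simp
        have h2 : (p * s * (1 - z)) ^ x = p ^ x * s ^ x * (1 - z) ^ x := by
          rw [mul_pow, mul_pow]
        rw [h1, h2]
        ring
    _ = (p * s * (1 - z) + (p * z + q)) ^ (N - i) *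
          (p * s * (1 - z) + (p * z + q) - p * s * (1 - z) / p) ^ i :=
        kraw_genfun N i hi p hp0 (p * s * (1 - z)) (p * z + q)
    _ = (q + p * z - q * (1 - z) * s) ^ i * (q + p * z + p * (1 - z) * s) ^ (N - i) := by
        rw [mul_comm]
        congr 1
        · have : p * s * (1 - z) + (p * z + q) - p * s * (1 - z) / p
              = q + p * z - q * (1 - z) * s := by
            rw [hq]; field_simp; ring
          rw [this]
        · congr 1
          ring
end

section
/- Conditional mean of the Ehrenfest process (Theorem 3.3(b)): for every i ∈ {0,1,…,N} and every t ≥ 0, Σ_{j=0}^{N} j · p_{ij}(t) = N·p − (N·p − i)·e^{−λ(α+β)t}. -/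
open Finset

lemma binomSum (n : ℕ) (w : ℝ) :
    ∑ m ∈ range (n + 1), (n.choose m : ℝ) * w ^ m = (1 + w) ^ n := by
  rw [add_comm 1 w, add_pow]
  simp [mul_comm]

lemma derivSum (n : ℕ) (w : ℝ) :
    ∑ m ∈ range (n + 1), (m : ℝ) * (n.choose m : ℝ) * w ^ m
      = (n : ℝ) * w * (1 + w) ^ (n - 1) := by
  cases n with
  | zero => simp
  | succ n =>
    rw [Finset.sum_range_succ']
    have h : ∀ r : ℕ, ((r + 1 : ℕ) : ℝ) * ((n + 1).choose (r + 1) : ℝ)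
        = ((n : ℝ) + 1) * (n.choose r : ℝ) := by
      intro r
      have h2 : (n + 1) * n.choose r = (n + 1).choose (r + 1) * (r + 1) := Nat.add_one_mul_choose_eq n r
      have h3 : ((n : ℝ) + 1) * (n.choose r : ℝ) = ((n + 1).choose (r + 1) : ℝ) * ((r + 1 : ℕ) : ℝ) := by
        exact_mod_cast congrArg (Nat.cast (R := ℝ)) h2
      rw [h3]; ring
    calc (∑ r ∈ range (n + 1), ((r + 1 : ℕ) : ℝ) * ((n + 1).choose (r + 1) : ℝ) * w ^ (r + 1))
          + ((0:ℕ) : ℝ) * ((n + 1).choose 0 : ℝ) * w ^ 0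
        = ∑ r ∈ range (n + 1), ((n : ℝ) + 1) * w * ((n.choose r : ℝ) * w ^ r) := by
          rw [Nat.cast_zero, zero_mul, zero_mul, add_zero]
          refine Finset.sum_congr rfl fun r _ => ?_
          rw [h r]; ring
      _ = ((n : ℝ) + 1) * w * (1 + w) ^ n := by
          rw [← Finset.mul_sum, binomSum]
      _ = ((n + 1 : ℕ) : ℝ) * w * (1 + w) ^ (n + 1 - 1) := by push_cast; ring_nf

lemma innerT (N k : ℕ) (hk : k ≤ N) (w : ℝ) :
    ∑ j ∈ range (N + 1), (j : ℝ) * (N.choose j : ℝ) * w ^ j * (j.choose k : ℝ)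
      = (N.choose k : ℝ) * w ^ k *
        ((k : ℝ) * (1 + w) ^ (N - k) + ((N - k : ℕ) : ℝ) * w * (1 + w) ^ (N - k - 1)) := by
  have hsplit : range (N + 1) = Finset.Ico 0 k ∪ Finset.Ico k (N + 1) := by
    rw [Finset.Ico_union_Ico_eq_Ico (Nat.zero_le k) (by omega), range_eq_Ico]
  rw [hsplit, Finset.sum_union (Finset.Ico_disjoint_Ico_consecutive 0 k (N + 1))]
  have h0 : ∑ j ∈ Finset.Ico 0 k, (j : ℝ) * (N.choose j : ℝ) * w ^ j * (j.choose k : ℝ) = 0 := by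
    refine Finset.sum_eq_zero fun j hj => ?_
    rw [Finset.mem_Ico] at hj
    rw [Nat.choose_eq_zero_of_lt hj.2]
    simp
  rw [h0, zero_add, Finset.sum_Ico_eq_sum_range]
  have hNk : N + 1 - k = (N - k) + 1 := by omega
  rw [hNk]
  have hterm : ∀ m ∈ range (N - k + 1),
      ((k + m : ℕ) : ℝ) * (N.choose (k + m) : ℝ) * w ^ (k + m) * ((k + m).choose k : ℝ)
        = (N.choose k : ℝ) * w ^ k *
            ((k : ℝ) * (((N - k).choose m : ℝ) * w ^ m)
              + (m : ℝ) * ((N - k).choose m : ℝ) * w ^ m) := by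
    intro m hm
    rw [mem_range] at hm
    have hc : N.choose (k + m) * (k + m).choose k = N.choose k * (N - k).choose m := by
      have := Nat.choose_mul (n := N) (k := k + m) (s := k) (by omega)
      simpa using this
    have hc' : (N.choose (k + m) : ℝ) * ((k + m).choose k : ℝ)
        = (N.choose k : ℝ) * ((N - k).choose m : ℝ) := by
      exact_mod_cast congrArg (Nat.cast (R := ℝ)) hc
    push_cast
    rw [pow_add]
    linear_combination ((k : ℝ) + (m : ℝ)) * w ^ k * w ^ m * hc'
  rw [Finset.sum_congr rfl hterm, ← Finset.mul_sum, Finset.sum_add_distrib]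
  rw [← Finset.mul_sum, binomSum, derivSum]

lemma asc_eval (k m : ℕ) :
    (ascPochhammer ℝ k).eval (-(m : ℝ)) = (-1) ^ k * (k.factorial : ℝ) * (m.choose k : ℝ) := by
  rw [ascPochhammer_eval_neg_eq_descPochhammer, descPochhammer_eval_eq_descFactorial,
    Nat.descFactorial_eq_factorial_mul_choose]
  push_cast
  ring

lemma kraw_eq (N : ℕ) (p : ℝ) (l x : ℕ) :
    krawtchouk N p l x = ∑ k ∈ range (N + 1),
      (-1) ^ k * (l.choose k : ℝ) * (x.choose k : ℝ) / (N.choose k : ℝ) * (1 / p) ^ k := by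
  refine Finset.sum_congr rfl fun k hk => ?_
  rw [mem_range] at hk
  have hkN : k ≤ N := by omega
  rw [asc_eval, asc_eval, asc_eval]
  have h1 : ((-1 : ℝ)) ^ k ≠ 0 := by positivity
  have h2 : (k.factorial : ℝ) ≠ 0 := by exact_mod_cast k.factorial_ne_zero
  have h3 : (N.choose k : ℝ) ≠ 0 := by exact_mod_cast (Nat.choose_pos hkN).ne'
  congr 1
  field_simp

lemma altA (x n : ℕ) (hx : x ≤ n) :
    ∑ k ∈ range (n + 1), (-1 : ℝ) ^ k * (x.choose k : ℝ)
      = if x = 0 then 1 else 0 := by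
  have hsub : ∑ k ∈ range (n + 1), (-1 : ℝ) ^ k * (x.choose k : ℝ)
      = ∑ k ∈ range (x + 1), (-1 : ℝ) ^ k * (x.choose k : ℝ) := by
    refine (Finset.sum_subset (by simp [Finset.range_subset]; omega) fun k _ hk => ?_).symm
    rw [mem_range, not_lt] at hk
    rw [Nat.choose_eq_zero_of_lt (by omega)]
    simp
  rw [hsub]
  have := Int.alternating_sum_range_choose (n := x)
  have h2 : ((∑ i ∈ range (x + 1), (-1 : ℤ) ^ i * (x.choose i : ℤ) : ℤ) : ℝ)
      = ((if x = 0 then (1 : ℤ) else 0 : ℤ) : ℝ) := by exact_mod_cast congrArg (fun z : ℤ => (z : ℝ)) this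
  push_cast at h2
  rw [h2]

lemma altB (x n : ℕ) (hx : x ≤ n) :
    ∑ k ∈ range (n + 1), (-1 : ℝ) ^ k * (k : ℝ) * (x.choose k : ℝ)
      = if x = 1 then -1 else 0 := by
  cases x with
  | zero =>
    rw [if_neg (by omega)]
    refine Finset.sum_eq_zero fun k hk => ?_
    cases k with
    | zero => simp
    | succ k => simp [Nat.choose_eq_zero_of_lt]
  | succ m =>
    have hn : 1 ≤ n := by omega
    rw [Finset.sum_range_succ']
    simp only [Nat.cast_zero, mul_zero, zero_mul, add_zero, pow_zero]
    have hterm : ∀ k ∈ range n, (-1 : ℝ) ^ (k + 1) * ((k + 1 : ℕ) : ℝ) * ((m + 1).choose (k + 1) : ℝ)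
        = -((m : ℝ) + 1) * ((-1 : ℝ) ^ k * (m.choose k : ℝ)) := by
      intro k hk
      have h2 : (m + 1) * m.choose k = (m + 1).choose (k + 1) * (k + 1) := Nat.add_one_mul_choose_eq m k
      have h3 : ((m : ℝ) + 1) * (m.choose k : ℝ) = ((m + 1).choose (k + 1) : ℝ) * ((k + 1 : ℕ) : ℝ) := by
        exact_mod_cast congrArg (Nat.cast (R := ℝ)) h2
      rw [pow_succ]
      linear_combination ((-1 : ℝ) ^ k) * h3
    rw [Finset.sum_congr rfl hterm, ← Finset.mul_sum]
    obtain ⟨n', rfl⟩ : ∃ n', n = n' + 1 := ⟨n - 1, by omega⟩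
    rw [altA m n' (by omega)]
    rcases Nat.eq_zero_or_pos m with hm | hm
    · subst hm; norm_num
    · rw [if_neg (by omega), if_neg (by omega), mul_zero]

lemma kraw_zero (N : ℕ) (p : ℝ) (l : ℕ) : krawtchouk N p l 0 = 1 := by
  rw [kraw_eq]
  rw [Finset.sum_eq_single 0]
  · simp
  · intro k _ hk
    obtain ⟨k, rfl⟩ : ∃ m, k = m + 1 := ⟨k - 1, by omega⟩
    simp [Nat.choose_eq_zero_of_lt]
  · simp

lemma kraw_one (N : ℕ) (hN : 1 ≤ N) (p : ℝ) (l : ℕ) :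
    krawtchouk N p l 1 = 1 - (l : ℝ) / ((N : ℝ) * p) := by
  rw [kraw_eq]
  obtain ⟨n, rfl⟩ : ∃ n, N = n + 1 := ⟨N - 1, by omega⟩
  rw [Finset.sum_range_succ', Finset.sum_range_succ']
  have hrest : ∀ k ∈ range n,
      (-1 : ℝ) ^ (k + 1 + 1) * (l.choose (k + 1 + 1) : ℝ) * ((Nat.choose 1 (k + 1 + 1) : ℕ) : ℝ)
          / ((n + 1).choose (k + 1 + 1) : ℝ) * (1 / p) ^ (k + 1 + 1) = 0 := by
    intro k _
    rw [Nat.choose_eq_zero_of_lt (show 1 < k + 1 + 1 by omega)]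
    simp
  rw [Finset.sum_congr rfl hrest]
  simp [Nat.choose_one_right]
  simp only [div_eq_mul_inv, mul_inv]
  ring

lemma S_eq (N x : ℕ) (hx : x ≤ N) (p q : ℝ) (hp : 0 < p) (hq : 0 < q) (hpq : p + q = 1) :
    ∑ j ∈ range (N + 1), (j : ℝ) * (N.choose j : ℝ) * (p / q) ^ j * krawtchouk N p j x
      = if x = 0 then (N : ℝ) * p / q ^ N else if x = 1 then -(1 / q ^ (N - 1)) else 0 := by
  have hq0 : q ≠ 0 := hq.ne'
  have hp0 : p ≠ 0 := hp.ne'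
  have h1w : 1 + p / q = 1 / q := by field_simp; linarith
  have step1 : ∑ j ∈ range (N + 1), (j : ℝ) * (N.choose j : ℝ) * (p / q) ^ j * krawtchouk N p j x
      = ∑ k ∈ range (N + 1), ∑ j ∈ range (N + 1),
          ((-1) ^ k * (x.choose k : ℝ) / (N.choose k : ℝ) * (1 / p) ^ k)
            * ((j : ℝ) * (N.choose j : ℝ) * (p / q) ^ j * (j.choose k : ℝ)) := by
    rw [← Finset.sum_comm]
    refine Finset.sum_congr rfl fun j _ => ?_
    rw [kraw_eq, Finset.mul_sum]
    refine Finset.sum_congr rfl fun k _ => ?_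
    ring
  rw [step1]
  have step2 : ∀ k ∈ range (N + 1),
      ∑ j ∈ range (N + 1),
          ((-1) ^ k * (x.choose k : ℝ) / (N.choose k : ℝ) * (1 / p) ^ k)
            * ((j : ℝ) * (N.choose j : ℝ) * (p / q) ^ j * (j.choose k : ℝ))
        = (1 / q) ^ N * ((-1 : ℝ) ^ k * (x.choose k : ℝ) * ((N : ℝ) * p)
            + (-1 : ℝ) ^ k * (k : ℝ) * (x.choose k : ℝ) * q) := by
    intro k hk
    rw [mem_range] at hk
    have hkN : k ≤ N := by omega
    rw [← Finset.mul_sum, innerT N k hkN, h1w]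
    have hcNk : (N.choose k : ℝ) ≠ 0 := by exact_mod_cast (Nat.choose_pos hkN).ne'
    have pow1 : (1 / p) ^ k * (p / q) ^ k = (1 / q) ^ k := by
      rw [← mul_pow]; field_simp
    have claim : (1 / q : ℝ) ^ k *
        ((k : ℝ) * (1 / q) ^ (N - k) + ((N - k : ℕ) : ℝ) * (p / q) * (1 / q) ^ (N - k - 1))
        = (1 / q) ^ N * ((N : ℝ) * p + (k : ℝ) * q) := by
      rcases eq_or_lt_of_le hkN with hEq | hlt
      · subst hEq
        simp only [Nat.sub_self, pow_zero, Nat.cast_zero, zero_mul, mul_one, add_zero,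
          Nat.zero_sub, zero_mul, add_zero]
        linear_combination ((1 / q : ℝ) ^ k * (k : ℝ)) * hpq.symm
      · obtain ⟨m, rfl⟩ : ∃ m, N = k + m + 1 := ⟨N - k - 1, by omega⟩
        have e1 : k + m + 1 - k = m + 1 := by omega
        have e2 : m + 1 - 1 = m := rfl
        rw [e1, e2]
        push_cast
        rw [pow_succ, show k + m + 1 = (k + m) + 1 from rfl, pow_succ, pow_add]
        field_simp
        linear_combination (-(k : ℝ)) * hpq
    calc ((-1 : ℝ) ^ k * (x.choose k : ℝ) / (N.choose k : ℝ) * (1 / p) ^ k) *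
          ((N.choose k : ℝ) * (p / q) ^ k *
            ((k : ℝ) * (1 / q) ^ (N - k) + ((N - k : ℕ) : ℝ) * (p / q) * (1 / q) ^ (N - k - 1)))
        = ((-1 : ℝ) ^ k * (x.choose k : ℝ)) * ((N.choose k : ℝ) / (N.choose k : ℝ)) *
            (((1 / p) ^ k * (p / q) ^ k) *
              ((k : ℝ) * (1 / q) ^ (N - k) + ((N - k : ℕ) : ℝ) * (p / q) * (1 / q) ^ (N - k - 1))) := by
          ring
      _ = ((-1 : ℝ) ^ k * (x.choose k : ℝ)) *
            ((1 / q) ^ k *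
              ((k : ℝ) * (1 / q) ^ (N - k) + ((N - k : ℕ) : ℝ) * (p / q) * (1 / q) ^ (N - k - 1))) := by
          rw [div_self hcNk, pow1]; ring
      _ = ((-1 : ℝ) ^ k * (x.choose k : ℝ)) * ((1 / q) ^ N * ((N : ℝ) * p + (k : ℝ) * q)) := by
          rw [claim]
      _ = (1 / q) ^ N * ((-1 : ℝ) ^ k * (x.choose k : ℝ) * ((N : ℝ) * p)
            + (-1 : ℝ) ^ k * (k : ℝ) * (x.choose k : ℝ) * q) := by ring
  rw [Finset.sum_congr rfl step2]
  have split : ∑ k ∈ range (N + 1),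
      (1 / q) ^ N * ((-1 : ℝ) ^ k * (x.choose k : ℝ) * ((N : ℝ) * p)
        + (-1 : ℝ) ^ k * (k : ℝ) * (x.choose k : ℝ) * q)
      = (1 / q) ^ N * (((N : ℝ) * p) * (if x = 0 then 1 else 0)
          + q * (if x = 1 then -1 else 0)) := by
    rw [← Finset.mul_sum, Finset.sum_add_distrib]
    congr 1
    rw [← Finset.sum_mul, ← Finset.sum_mul, altA x N hx, altB x N hx]
    ring
  rw [split, div_pow, one_pow]
  rcases Nat.eq_zero_or_pos x with h0 | hxpos
  · subst h0
    norm_num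
    ring
  · rcases eq_or_ne x 1 with h1 | h1
    · subst h1
      rw [if_neg (by omega), if_pos rfl]
      rw [if_neg (by omega), if_pos rfl]
      have hN1 : q ^ N = q ^ (N - 1) * q := by
        rw [← pow_succ]; congr 1; omega
      rw [hN1]
      field_simp
      ring
    · rw [if_neg (by omega), if_neg h1, if_neg (by omega), if_neg h1]
      ring

/-- Conditional mean of the Ehrenfest process. -/
theorem ehrenfest_conditional_mean (N : ℕ) (lam α β : ℝ) (hlam : 0 < lam)
    (hα : α ∈ Set.Ioc (0 : ℝ) 1) (hβ : β ∈ Set.Ioc (0 : ℝ) 1)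
    (p q : ℝ) (hp : p = α / (α + β)) (hq : q = 1 - p)
    (i : ℕ) (hi : i ≤ N) (t : ℝ) (ht : 0 ≤ t) :
    ∑ j ∈ Finset.range (N + 1), (j : ℝ) * ehrenfestP N p q lam α β i j t =
      (N : ℝ) * p - ((N : ℝ) * p - (i : ℝ)) * Real.exp (-(lam * (α + β) * t)) := by
  have hab : 0 < α + β := by linarith [hα.1, hβ.1]
  have hp' : 0 < p := by rw [hp]; exact div_pos hα.1 hab
  have hp1 : p < 1 := by
    rw [hp, div_lt_one hab]; linarith [hβ.1]
  have hq' : 0 < q := by rw [hq]; linarith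
  have hpq : p + q = 1 := by rw [hq]; ring
  -- swap sums
  have step1 : ∑ j ∈ Finset.range (N + 1), (j : ℝ) * ehrenfestP N p q lam α β i j t
      = ∑ x ∈ range (N + 1),
          ((N.choose x : ℝ) * p ^ x * q ^ (N - x) * krawtchouk N p i x *
              Real.exp (-(lam * (α + β) * (x : ℝ) * t))) *
            ∑ j ∈ range (N + 1), (j : ℝ) * (N.choose j : ℝ) * (p / q) ^ j * krawtchouk N p j x := by
    unfold ehrenfestP
    have expand : ∀ j ∈ range (N + 1), (j : ℝ) * ((N.choose j : ℝ) * (p / q) ^ j *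
        ∑ x ∈ range (N + 1),
          (N.choose x : ℝ) * p ^ x * q ^ (N - x) * krawtchouk N p i x * krawtchouk N p j x *
            Real.exp (-(lam * (α + β) * (x : ℝ) * t)))
        = ∑ x ∈ range (N + 1),
            ((N.choose x : ℝ) * p ^ x * q ^ (N - x) * krawtchouk N p i x *
                Real.exp (-(lam * (α + β) * (x : ℝ) * t))) *
              ((j : ℝ) * (N.choose j : ℝ) * (p / q) ^ j * krawtchouk N p j x) := by
      intro j _
      rw [Finset.mul_sum, Finset.mul_sum]
      refine Finset.sum_congr rfl fun x _ => ?_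
      ring
    rw [Finset.sum_congr rfl expand, Finset.sum_comm]
    refine Finset.sum_congr rfl fun x _ => ?_
    rw [Finset.mul_sum]
  rw [step1]
  have step2 : ∀ x ∈ range (N + 1),
      ((N.choose x : ℝ) * p ^ x * q ^ (N - x) * krawtchouk N p i x *
          Real.exp (-(lam * (α + β) * (x : ℝ) * t))) *
        ∑ j ∈ range (N + 1), (j : ℝ) * (N.choose j : ℝ) * (p / q) ^ j * krawtchouk N p j x
      = ((N.choose x : ℝ) * p ^ x * q ^ (N - x) * krawtchouk N p i x *
          Real.exp (-(lam * (α + β) * (x : ℝ) * t))) *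
        (if x = 0 then (N : ℝ) * p / q ^ N else if x = 1 then -(1 / q ^ (N - 1)) else 0) := by
    intro x hx
    rw [mem_range] at hx
    rw [S_eq N x (by omega) p q hp' hq' hpq]
  rw [Finset.sum_congr rfl step2]
  cases N with
  | zero =>
    interval_cases i
    simp
  | succ n =>
    rw [Finset.sum_range_succ', Finset.sum_range_succ']
    have hrest : ∀ x ∈ range n,
        (((n + 1).choose (x + 1 + 1) : ℝ) * p ^ (x + 1 + 1) * q ^ (n + 1 - (x + 1 + 1)) *
            krawtchouk (n + 1) p i (x + 1 + 1) *
            Real.exp (-(lam * (α + β) * ((x + 1 + 1 : ℕ) : ℝ) * t))) *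
          (if x + 1 + 1 = 0 then ((n + 1 : ℕ) : ℝ) * p / q ^ (n + 1)
            else if x + 1 + 1 = 1 then -(1 / q ^ (n + 1 - 1)) else 0) = 0 := by
      intro x _
      rw [if_neg (by omega), if_neg (by omega), mul_zero]
    rw [Finset.sum_congr rfl hrest, Finset.sum_const_zero, zero_add]
    rw [if_neg (by omega), if_pos rfl, if_pos rfl]
    rw [kraw_zero, kraw_one (n + 1) (by omega) p i]
    have hq0 : q ≠ 0 := hq'.ne'
    have hp0 : p ≠ 0 := hp'.ne'
    have hNp : ((n : ℝ) + 1) * p ≠ 0 := by positivity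
    simp only [Nat.choose_zero_right, Nat.choose_one_right, Nat.cast_zero, Nat.cast_one,
      Nat.cast_ofNat, pow_zero, pow_one, Nat.sub_zero, Nat.cast_succ, mul_zero, zero_mul, mul_one,
      one_mul, Nat.cast_add, neg_zero, Real.exp_zero]
    simp only [Nat.add_sub_cancel]
    norm_num [Nat.choose_one_right]
    have hqn : q ^ (n + 1) ≠ 0 := pow_ne_zero _ hq0
    have hqe : q ^ n ≠ 0 := pow_ne_zero _ hq0
    field_simp
    ring
end
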